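/- There exists a partition P of N such that W(p) ≥ W(q) for all fuzzy covers q ∈ Δ_N, where p ∈ Δ_N is the point associated to P; moreover W(p) = ∑_{A ∈ P} w(A). In other words, the maximum of the multilinear objective W over the product of simplices Δ_N is attained at a partition of the ground set. -/

import Mathlib

open Finset

/-- Möbius inversion of a set function `w : 2^N → ℝ`:
`μ^w(A) = ∑_{B ⊆ A} (−1)^{|A∖B|} w(B)`. -/
def mobius {n : ℕ} (w : Finset (Fin n) → ℝ) (A : Finset (Fin n)) : ℝ :=
  ∑ B ∈ A.powerset, (-1 : ℝ) ^ (A.card - B.card) * w B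

/-- `qi` is a membership distribution for element `i`: nonnegative, supported on
the subsets containing `i`, and summing to `1` over them. -/
def coordDist {n : ℕ} (i : Fin n) (qi : Finset (Fin n) → ℝ) : Prop :=
  (∀ A, 0 ≤ qi A) ∧ (∀ A, i ∉ A → qi A = 0) ∧
    ∑ A ∈ Finset.univ.filter (fun A => i ∈ A), qi A = 1

/-- A fuzzy cover `q ∈ Δ_N`. -/
def fuzzyCover {n : ℕ} (q : Fin n → Finset (Fin n) → ℝ) : Prop :=
  ∀ i, coordDist i (q i)

/-- Global worth `W(q) = ∑_{A⊆N} ∑_{B⊆A} (∏_{i∈B} q_i^A) μ^w(B)`. -/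
def W {n : ℕ} (w : Finset (Fin n) → ℝ) (q : Fin n → Finset (Fin n) → ℝ) : ℝ :=
  ∑ A : Finset (Fin n), ∑ B ∈ A.powerset, (∏ i ∈ B, q i A) * mobius w B


/-- The point of `Δ_N` associated to a partition `P` of `N`:
`p_i^A = 1` iff `A` is the block of `P` containing `i`. -/
def partPoint {n : ℕ} (P : Finpartition (Finset.univ : Finset (Fin n))) :
    Fin n → Finset (Fin n) → ℝ :=
  fun i A => if A ∈ P.parts ∧ i ∈ A then 1 else 0

namespace MaxAux

variable {n : ℕ}


/-- Möbius inversion: summing the Möbius transform over a powerset recovers `w`. -/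
lemma mobius_inv (w : Finset (Fin n) → ℝ) (S : Finset (Fin n)) :
    ∑ B ∈ S.powerset, mobius w B = w S := by
  unfold mobius
  rw [Finset.sum_comm' (s' := fun C => S.powerset.filter (fun B => C ⊆ B)) (t' := S.powerset)
    (fun B C => by
      simp only [Finset.mem_powerset, Finset.mem_filter]
      constructor
      · rintro ⟨h1, h2⟩; exact ⟨⟨h1, h2⟩, h2.trans h1⟩
      · rintro ⟨⟨h1, h2⟩, h3⟩; exact ⟨h1, h2⟩)]
  have hinner : ∀ C ∈ S.powerset,
      (∑ B ∈ S.powerset.filter (fun B => C ⊆ B), (-1 : ℝ) ^ (B.card - C.card) * w C)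
        = (if C = S then (1:ℝ) else 0) * w C := by
    intro C hC
    rw [Finset.mem_powerset] at hC
    have hbij : S.powerset.filter (fun B => C ⊆ B)
        = (S \ C).powerset.image (fun D => C ∪ D) := by
      ext B
      simp only [Finset.mem_filter, Finset.mem_powerset, Finset.mem_image]
      constructor
      · rintro ⟨hBS, hCB⟩
        exact ⟨B \ C, fun x hx => by
          simp only [Finset.mem_sdiff] at hx ⊢
          exact ⟨hBS hx.1, hx.2⟩, by rw [Finset.union_sdiff_of_subset hCB]⟩
      · rintro ⟨D, hD, rfl⟩
        exact ⟨Finset.union_subset hC (hD.trans Finset.sdiff_subset), Finset.subset_union_left⟩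
    have hinj : ∀ D₁ ∈ (S \ C).powerset, ∀ D₂ ∈ (S \ C).powerset,
        C ∪ D₁ = C ∪ D₂ → D₁ = D₂ := by
      intro D₁ h1 D₂ h2 h
      rw [Finset.mem_powerset] at h1 h2
      have e1 : (C ∪ D₁) \ C = D₁ := by
        rw [Finset.union_sdiff_left]
        exact Finset.sdiff_eq_self_of_disjoint
          (Finset.disjoint_left.mpr fun x hx hxC => (Finset.mem_sdiff.mp (h1 hx)).2 hxC)
      have e2 : (C ∪ D₂) \ C = D₂ := by
        rw [Finset.union_sdiff_left]
        exact Finset.sdiff_eq_self_of_disjoint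
          (Finset.disjoint_left.mpr fun x hx hxC => (Finset.mem_sdiff.mp (h2 hx)).2 hxC)
      rw [← e1, ← e2, h]
    rw [hbij, Finset.sum_image hinj]
    have hcard : ∀ D ∈ (S \ C).powerset, (C ∪ D).card - C.card = D.card := by
      intro D hD
      rw [Finset.mem_powerset] at hD
      have hdisj : Disjoint C D :=
        Finset.disjoint_left.mpr fun x hxC hxD => (Finset.mem_sdiff.mp (hD hxD)).2 hxC
      rw [Finset.card_union_of_disjoint hdisj]
      omega
    rw [Finset.sum_congr rfl (fun D hD => by rw [hcard D hD]), ← Finset.sum_mul]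
    congr 1
    have hz := Finset.sum_powerset_neg_one_pow_card (α := Fin n) (x := S \ C)
    have hr : (∑ D ∈ (S \ C).powerset, (-1:ℝ) ^ D.card) = if S \ C = ∅ then 1 else 0 := by
      have := congrArg (fun z : ℤ => (z : ℝ)) hz
      simpa using this
    rw [hr]
    have : S \ C = ∅ ↔ C = S := by
      rw [Finset.sdiff_eq_empty_iff_subset]
      exact ⟨fun h => le_antisymm hC h, fun h => h ▸ le_refl _⟩
    simp [this]
  rw [Finset.sum_congr rfl hinner,
    Finset.sum_congr rfl (fun C _ => by split_ifs <;> ring :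
      ∀ C ∈ S.powerset, (if C = S then (1:ℝ) else 0) * w C = if C = S then w C else 0),
    Finset.sum_ite_eq' S.powerset S w]
  simp

/-- The pure (vertex) profile associated to a selection `σ`. -/
def delta (σ : Fin n → Finset (Fin n)) : Fin n → Finset (Fin n) → ℝ :=
  fun i A => if σ i = A then 1 else 0

/-- The fiber of `σ` over `A`. -/
def fiber (σ : Fin n → Finset (Fin n)) (A : Finset (Fin n)) : Finset (Fin n) :=
  Finset.univ.filter (fun i => σ i = A)

lemma fiber_subset {σ : Fin n → Finset (Fin n)} (hσ : ∀ i, i ∈ σ i) (A : Finset (Fin n)) :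
    fiber σ A ⊆ A := by
  intro i hi
  rw [fiber, Finset.mem_filter] at hi
  exact hi.2 ▸ hσ i

lemma W_delta (w : Finset (Fin n) → ℝ) (σ : Fin n → Finset (Fin n)) (hσ : ∀ i, i ∈ σ i) :
    W w (delta σ) = ∑ A : Finset (Fin n), w (fiber σ A) := by
  unfold W
  refine Finset.sum_congr rfl fun A _ => ?_
  have h1 : ∀ B ∈ A.powerset, (∏ i ∈ B, delta σ i A) * mobius w B
      = if B ∈ (fiber σ A).powerset then mobius w B else 0 := by
    intro B hB
    have : (∏ i ∈ B, delta σ i A) = if ∀ i ∈ B, σ i = A then (1:ℝ) else 0 := by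
      unfold delta; rw [Finset.prod_boole]; simp
    rw [this]
    have hiff : (∀ i ∈ B, σ i = A) ↔ B ∈ (fiber σ A).powerset := by
      simp [fiber, Finset.mem_powerset, Finset.subset_iff]
    by_cases h2 : ∀ i ∈ B, σ i = A
    · rw [if_pos h2, if_pos (hiff.mp h2), one_mul]
    · rw [if_neg h2, if_neg fun h3 => h2 (hiff.mpr h3), zero_mul]
  rw [Finset.sum_congr rfl h1, Finset.sum_ite_mem, ← mobius_inv w (fiber σ A)]
  congr 1
  rw [Finset.inter_eq_right.mpr]
  exact Finset.powerset_mono.mpr (fiber_subset hσ A)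

lemma sum_total {i : Fin n} {qi : Finset (Fin n) → ℝ} (h : coordDist i qi) :
    ∑ A : Finset (Fin n), qi A = 1 := by
  rw [← Finset.sum_filter_add_sum_filter_not Finset.univ (fun A => i ∈ A)]
  rw [Finset.sum_eq_zero (fun A hA => h.2.1 A (Finset.mem_filter.mp hA).2), add_zero]
  exact h.2.2

lemma key_sum {q : Fin n → Finset (Fin n) → ℝ} (hq : fuzzyCover q) (A B : Finset (Fin n)) :
    ∑ σ : Fin n → Finset (Fin n), (∏ i, q i (σ i)) * (∏ i ∈ B, delta σ i A)
      = ∏ i ∈ B, q i A := by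
  have hg : ∀ σ : Fin n → Finset (Fin n),
      (∏ i, q i (σ i)) * (∏ i ∈ B, delta σ i A)
        = ∏ i, (q i (σ i) * (if i ∈ B then (if σ i = A then 1 else 0) else 1)) := by
    intro σ
    rw [Finset.prod_mul_distrib]
    congr 1
    rw [Fintype.prod_ite_mem B (fun i => if σ i = A then (1:ℝ) else 0)]
    rfl
  rw [Finset.sum_congr rfl (fun σ _ => hg σ)]
  rw [← Fintype.prod_sum (fun i A' => q i A' * (if i ∈ B then (if A' = A then 1 else 0) else 1))]
  have hcol : ∀ i : Fin n,
      (∑ A' : Finset (Fin n), q i A' * (if i ∈ B then (if A' = A then 1 else 0) else 1))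
        = if i ∈ B then q i A else 1 := by
    intro i
    by_cases hiB : i ∈ B
    · simp only [hiB, if_true, mul_ite, mul_one, mul_zero]
      rw [Finset.sum_ite_eq' Finset.univ A (fun A' => q i A')]
      simp
    · simp only [hiB, if_false, mul_one]
      exact sum_total (hq i)
  rw [Finset.prod_congr rfl (fun i _ => hcol i)]
  rw [Fintype.prod_ite_mem B (fun i => q i A)]

lemma W_decomp (w : Finset (Fin n) → ℝ) {q : Fin n → Finset (Fin n) → ℝ} (hq : fuzzyCover q) :
    W w q = ∑ σ : Fin n → Finset (Fin n), (∏ i, q i (σ i)) * W w (delta σ) := by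
  have expand : ∀ σ : Fin n → Finset (Fin n),
      (∏ i, q i (σ i)) * W w (delta σ)
        = ∑ A : Finset (Fin n), ∑ B ∈ A.powerset,
            (∏ i, q i (σ i)) * ((∏ i ∈ B, delta σ i A) * mobius w B) := by
    intro σ
    rw [W, Finset.mul_sum]
    exact Finset.sum_congr rfl fun A _ => Finset.mul_sum _ _ _
  rw [Finset.sum_congr rfl (fun σ _ => expand σ), Finset.sum_comm]
  unfold W
  refine Finset.sum_congr rfl fun A _ => ?_
  rw [Finset.sum_comm]
  refine Finset.sum_congr rfl fun B _ => ?_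
  have : ∀ σ : Fin n → Finset (Fin n),
      (∏ i, q i (σ i)) * ((∏ i ∈ B, delta σ i A) * mobius w B)
        = ((∏ i, q i (σ i)) * (∏ i ∈ B, delta σ i A)) * mobius w B := fun σ => by ring
  rw [Finset.sum_congr rfl (fun σ _ => this σ), ← Finset.sum_mul, key_sum hq A B]

/-- The partition of the ground set into the (nonempty) fibers of `σ`. -/
def partOf (σ : Fin n → Finset (Fin n)) (hσ : ∀ i, i ∈ σ i) :
    Finpartition (Finset.univ : Finset (Fin n)) where
  parts := ((Finset.univ : Finset (Finset (Fin n))).image (fiber σ)).erase ∅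
  supIndep := by
    rw [Finset.supIndep_iff_pairwiseDisjoint]
    intro S hS T hT hST
    simp only [Finset.coe_erase, Set.mem_diff, Finset.coe_image, Set.mem_image] at hS hT
    obtain ⟨⟨A, -, rfl⟩, -⟩ := hS
    obtain ⟨⟨A', -, rfl⟩, -⟩ := hT
    refine Finset.disjoint_left.mpr fun i hi hi' => ?_
    simp only [id_eq, fiber, Finset.mem_filter] at hi hi'
    exact hST (by rw [← hi.2, ← hi'.2])
  sup_parts := by
    apply le_antisymm
    · exact Finset.sup_le fun S _ => Finset.subset_univ S
    · intro i _hi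
      rw [Finset.mem_sup]
      refine ⟨fiber σ (σ i), ?_, ?_⟩
      · rw [Finset.mem_erase]
        constructor
        · intro h
          have : i ∈ fiber σ (σ i) := by simp [fiber]
          rw [h] at this
          exact absurd this (Finset.notMem_empty i)
        · exact Finset.mem_image.mpr ⟨σ i, Finset.mem_univ _, rfl⟩
      · simp [fiber]
  bot_notMem := Finset.notMem_erase _ _

lemma sum_parts_partOf (w : Finset (Fin n) → ℝ) (hw : w ∅ = 0)
    (σ : Fin n → Finset (Fin n)) (hσ : ∀ i, i ∈ σ i) :
    ∑ A : Finset (Fin n), w (fiber σ A) = ∑ S ∈ (partOf σ hσ).parts, w S := by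
  rw [← Finset.sum_filter_add_sum_filter_not Finset.univ (fun A => fiber σ A ≠ ∅)]
  have h2 : ∑ A ∈ Finset.univ.filter (fun A => ¬ fiber σ A ≠ ∅), w (fiber σ A) = 0 := by
    refine Finset.sum_eq_zero fun A hA => ?_
    rw [Finset.mem_filter, not_not] at hA
    rw [hA.2, hw]
  rw [h2, add_zero]
  have hparts : (partOf σ hσ).parts
      = (Finset.univ.filter (fun A => fiber σ A ≠ ∅)).image (fiber σ) := by
    ext S
    simp only [partOf, Finset.mem_erase, Finset.mem_image, Finset.mem_filter, Finset.mem_univ,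
      true_and]
    constructor
    · rintro ⟨hS0, A, rfl⟩
      exact ⟨A, hS0, rfl⟩
    · rintro ⟨A, hA, rfl⟩
      exact ⟨hA, A, rfl⟩
  rw [hparts, Finset.sum_image]
  intro A hA A' hA' h
  rw [Finset.mem_coe, Finset.mem_filter] at hA
  obtain ⟨i, hi⟩ := Finset.nonempty_iff_ne_empty.mpr hA.2
  have h1 : σ i = A := by
    rw [fiber, Finset.mem_filter] at hi; exact hi.2
  have h2 : σ i = A' := by
    rw [h, fiber, Finset.mem_filter] at hi; exact hi.2
  rw [← h1, h2]

lemma partPoint_eq_delta (P : Finpartition (Finset.univ : Finset (Fin n))) :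
    partPoint P = delta (fun i => P.part i) := by
  funext i A
  have hiff : (A ∈ P.parts ∧ i ∈ A) ↔ P.part i = A :=
    ⟨fun h => P.part_eq_of_mem h.1 h.2,
     fun h => h ▸ ⟨P.part_mem.mpr (Finset.mem_univ i), P.mem_part (Finset.mem_univ i)⟩⟩
  simp only [partPoint, delta]
  exact if_congr hiff rfl rfl

lemma fiber_part (P : Finpartition (Finset.univ : Finset (Fin n))) (A : Finset (Fin n)) :
    fiber (fun i => P.part i) A = if A ∈ P.parts then A else ∅ := by
  ext i
  rw [fiber, Finset.mem_filter]
  split_ifs with hA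
  · simp only [Finset.mem_univ, true_and]
    exact ⟨fun h => h ▸ P.mem_part (Finset.mem_univ i), fun h => P.part_eq_of_mem hA h⟩
  · simp only [Finset.mem_univ, true_and, Finset.notMem_empty, iff_false]
    intro h
    exact hA (h ▸ P.part_mem.mpr (Finset.mem_univ i))

lemma W_partPoint (w : Finset (Fin n) → ℝ) (hw : w ∅ = 0)
    (P : Finpartition (Finset.univ : Finset (Fin n))) :
    W w (partPoint P) = ∑ A ∈ P.parts, w A := by
  rw [partPoint_eq_delta, W_delta w _ (fun i => P.mem_part (Finset.mem_univ i))]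
  rw [Finset.sum_congr rfl (fun A _ => by rw [fiber_part P A])]
  have : ∀ A ∈ (Finset.univ : Finset (Finset (Fin n))),
      w (if A ∈ P.parts then A else ∅) = if A ∈ P.parts then w A else 0 := by
    intro A _
    split_ifs
    · rfl
    · exact hw
  rw [Finset.sum_congr rfl this, Finset.sum_ite_mem, Finset.univ_inter]

end MaxAux

/-- the maximum of `W` over `Δ_N` is attained at (the point
associated to) some partition `P` of the ground set, and there
`W(p) = ∑_{A ∈ P} w(A)`. -/
theorem maximizer_partition_exists {n : ℕ} (w : Finset (Fin n) → ℝ) (hw : w ∅ = 0) :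
    ∃ P : Finpartition (Finset.univ : Finset (Fin n)),
      (∀ q : Fin n → Finset (Fin n) → ℝ, fuzzyCover q → W w q ≤ W w (partPoint P)) ∧
      W w (partPoint P) = ∑ A ∈ P.parts, w A := by
  classical
  set V : Finset (Fin n → Finset (Fin n)) :=
    Finset.univ.filter (fun σ => ∀ i, i ∈ σ i) with hV
  have hVne : V.Nonempty := ⟨fun i => {i}, by simp [hV]⟩
  obtain ⟨σ₀, hσ₀V, hmax⟩ := Finset.exists_max_image V (fun σ => W w (MaxAux.delta σ)) hVne
  have hσ₀ : ∀ i, i ∈ σ₀ i := by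
    rw [hV, Finset.mem_filter] at hσ₀V
    exact hσ₀V.2
  refine ⟨MaxAux.partOf σ₀ hσ₀, ?_, MaxAux.W_partPoint w hw _⟩
  intro q hq
  have hWp : W w (partPoint (MaxAux.partOf σ₀ hσ₀)) = W w (MaxAux.delta σ₀) := by
    rw [MaxAux.W_partPoint w hw, ← MaxAux.sum_parts_partOf w hw σ₀ hσ₀,
      ← MaxAux.W_delta w σ₀ hσ₀]
  rw [hWp, MaxAux.W_decomp w hq]
  have hterm : ∀ σ : Fin n → Finset (Fin n),
      (∏ i, q i (σ i)) * W w (MaxAux.delta σ)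
        ≤ (∏ i, q i (σ i)) * W w (MaxAux.delta σ₀) := by
    intro σ
    rcases eq_or_ne (∏ i, q i (σ i)) 0 with h0 | h0
    · rw [h0, zero_mul, zero_mul]
    · have hvalid : ∀ i, i ∈ σ i := by
        intro i
        by_contra hi
        exact h0 (Finset.prod_eq_zero (Finset.mem_univ i) ((hq i).2.1 _ hi))
      have hmem : σ ∈ V := by
        rw [hV, Finset.mem_filter]
        exact ⟨Finset.mem_univ _, hvalid⟩
      exact mul_le_mul_of_nonneg_left (hmax σ hmem)
        (Finset.prod_nonneg fun i _ => (hq i).1 _)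
  have hone : (∑ σ : Fin n → Finset (Fin n), ∏ i, q i (σ i)) = 1 := by
    rw [← Fintype.prod_sum (fun i A => q i A)]
    exact Finset.prod_eq_one fun i _ => MaxAux.sum_total (hq i)
  calc ∑ σ : Fin n → Finset (Fin n), (∏ i, q i (σ i)) * W w (MaxAux.delta σ)
      ≤ ∑ σ : Fin n → Finset (Fin n), (∏ i, q i (σ i)) * W w (MaxAux.delta σ₀) :=
        Finset.sum_le_sum fun σ _ => hterm σ
    _ = W w (MaxAux.delta σ₀) := by rw [← Finset.sum_mul, hone, one_mul]
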